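/- Let M be a Hausdorff topological space and n ≥ 1. Let P_n be the poset of partitions of {1,…,n} ordered so that π ≤ π' iff π' refines π (π is coarser). Then the map s : M^n → Alex(P_n) sending a tuple (m_1,…,m_n) to its coincidence partition (the partition whose blocks are the equivalence classes of i ∼ j ⇔ m_i = m_j) is continuous, where Alex(P_n) carries the Alexandrov topology (opens are upward-closed sets). -/
import Mathlib


/-- The Alexandrov topology on a preordered set: open sets are exactly the
upward-closed subsets. -/
def alexandrov (P : Type*) [Preorder P] : TopologicalSpace P where
  IsOpen s := IsUpperSet s
  isOpen_univ := isUpperSet_univ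
  isOpen_inter _ _ hs ht := hs.inter ht
  isOpen_sUnion _ h := isUpperSet_sUnion h

/-- The coincidence partition of a tuple `m : Fin n → M`, recorded as the setoid
`i ∼ j ↔ m i = m j` on `Fin n`. -/
def coincidence {M : Type*} {n : ℕ} (m : Fin n → M) : Setoid (Fin n) :=
  ⟨fun i j => m i = m j, ⟨fun _ => rfl, fun h => h.symm, fun h h' => h.trans h'⟩⟩

/-- Let `M` be Hausdorff and `n ≥ 1`. The map `M^n → Alex(P_n)` sending a tuple
to its coincidence partition is continuous, where `P_n` is the poset of
partitions of `{1,…,n}` ordered so that `π ≤ π'` iff `π'` refines `π` (here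
encoded as setoids on `Fin n` with the order dual of the implication order,
so that finer partitions are larger), and `Alex(P_n)` carries the Alexandrov
topology. -/
theorem coincidence_continuous (M : Type*) [TopologicalSpace M] [T2Space M]
    (n : ℕ) (hn : 1 ≤ n) :
    @Continuous (Fin n → M) (Setoid (Fin n))ᵒᵈ _ (alexandrov (Setoid (Fin n))ᵒᵈ)
      (fun m => OrderDual.toDual (coincidence m)) := by
  rw [continuous_def]
  intro U hU
  rw [isOpen_iff_forall_mem_open]
  intro m hm
  refine ⟨⋂ (p : Fin n × Fin n) (_ : m p.1 ≠ m p.2), {m' : Fin n → M | m' p.1 ≠ m' p.2},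
    ?_, ?_, ?_⟩
  · intro m' hm'
    simp only [Set.mem_iInter, Set.mem_setOf_eq] at hm'
    have hle : coincidence m' ≤ coincidence m := by
      intro i j hij
      by_contra h
      exact hm' (i, j) h hij
    exact hU hle hm
  · refine isOpen_iInter_of_finite fun p => isOpen_iInter_of_finite fun hp => ?_
    have : Continuous (fun m' : Fin n → M => (m' p.1, m' p.2)) :=
      (continuous_apply p.1).prodMk (continuous_apply p.2)
    exact (isClosed_diagonal.isOpen_compl).preimage this
  · simp only [Set.mem_iInter, Set.mem_setOf_eq]
    exact fun p hp => hp
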